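/- Let n and r be integers with n > r > n/2 > 1. Then (n^n - (r+1)(n-r)^n) · (2r - n) > 0; equivalently, n^n > (r+1)(n-r)^n. -/

import Mathlib

/-- For integers `n > r > n/2 > 1`, one has
`(n^n - (r+1)(n-r)^n) · (2r - n) > 0`; equivalently `n^n > (r+1)(n-r)^n`. -/
theorem stmt_2 (n r : ℕ) (h1 : (1 : ℚ) < (n : ℚ) / 2) (h2 : (n : ℚ) / 2 < r) (h3 : r < n) :
    0 < ((n : ℤ) ^ n - ((r : ℤ) + 1) * ((n : ℤ) - (r : ℤ)) ^ n) * (2 * (r : ℤ) - (n : ℤ)) ∧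
      ((r : ℤ) + 1) * ((n : ℤ) - (r : ℤ)) ^ n < (n : ℤ) ^ n := by
  have hn2 : 2 < n := by
    have : (2 : ℚ) < n := by linarith
    exact_mod_cast this
  have h2r : n < 2 * r := by
    have : (n : ℚ) < 2 * r := by linarith
    exact_mod_cast this
  have key : (r + 1) * (n - r) ^ n < n ^ n := by
    calc (r + 1) * (n - r) ^ n ≤ n * (n - r) ^ n :=
          Nat.mul_le_mul_right _ (by omega)
      _ < 2 ^ n * (n - r) ^ n := by
          exact mul_lt_mul_of_pos_right Nat.lt_two_pow_self
            (Nat.pow_pos (n := n) (by omega))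
      _ = (2 * (n - r)) ^ n := by rw [mul_pow]
      _ ≤ (n - 1) ^ n := Nat.pow_le_pow_left (by omega) n
      _ < n ^ n := Nat.pow_lt_pow_left (by omega) (by omega)
  have keyZ : ((r : ℤ) + 1) * ((n : ℤ) - (r : ℤ)) ^ n < (n : ℤ) ^ n := by
    have := key
    zify [h3.le] at this
    exact this
  refine ⟨mul_pos (by linarith) ?_, keyZ⟩
  have : (n : ℤ) < 2 * r := by exact_mod_cast h2r
  linarith
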